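/- Let ω : ℝ → ℝ be continuous, let x : ℝ → ℝ satisfy x'' + ω(t)²·x = 0, and let ρ : ℝ → ℝ be strictly positive, twice differentiable, and satisfy ρ'' + ω(t)²·ρ = 1/ρ³. Define the new time variable T(t) = ∫₀ᵗ ρ(s)⁻² ds and Q(t) = x(t)/ρ(t). Then Q, viewed as a function of T (i.e., writing Q(t) = q(T(t)) for a twice differentiable q), satisfies the autonomous harmonic oscillator equation q''(T) + q(T) = 0. -/

import Mathlib

open intervalIntegral

/-- The transformation `Q = x/ρ`, `T = ∫ ρ⁻²` maps the nonautonomous oscillator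
`x'' + ω(t)² x = 0` to the autonomous harmonic oscillator `q'' + q = 0`, where
`ρ > 0` solves the Ermakov–Pinney equation `ρ'' + ω² ρ = 1/ρ³`. -/
theorem stmt2 (ω x ρ : ℝ → ℝ) (hω : Continuous ω)
    (hx : Differentiable ℝ x) (hx' : Differentiable ℝ (deriv x))
    (hxeq : ∀ t, deriv (deriv x) t + ω t ^ 2 * x t = 0)
    (hρpos : ∀ t, 0 < ρ t)
    (hρ : Differentiable ℝ ρ) (hρ' : Differentiable ℝ (deriv ρ))
    (hρeq : ∀ t, deriv (deriv ρ) t + ω t ^ 2 * ρ t = 1 / ρ t ^ 3)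
    (T : ℝ → ℝ) (hT : ∀ t, T t = ∫ s in (0:ℝ)..t, (ρ s) ⁻¹ ^ 2)
    (q : ℝ → ℝ) (hq : Differentiable ℝ q) (hq' : Differentiable ℝ (deriv q))
    (hQ : ∀ t, x t / ρ t = q (T t)) :
    ∀ t, deriv (deriv q) (T t) + q (T t) = 0 := by
  have hρne : ∀ t, ρ t ≠ 0 := fun t => (hρpos t).ne'
  have hc : Continuous fun s => (ρ s)⁻¹ ^ 2 :=
    (hρ.continuous.inv₀ hρne).pow 2
  have hTd : ∀ t, HasDerivAt T ((ρ t)⁻¹ ^ 2) t := by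
    intro t
    have h := (hc.integral_hasStrictDerivAt 0 t).hasDerivAt
    have : T = fun u => ∫ s in (0:ℝ)..u, (ρ s)⁻¹ ^ 2 := funext hT
    rw [this]
    exact h
  -- first derivative identity
  have hstep1 : ∀ t, deriv q (T t) = deriv x t * ρ t - x t * deriv ρ t := by
    intro t
    have hA : HasDerivAt (fun u => q (T u)) (deriv q (T t) * ((ρ t)⁻¹ ^ 2)) t :=
      ((hq (T t)).hasDerivAt).comp t (hTd t)
    have hB : HasDerivAt (fun u => x u / ρ u)
        ((deriv x t * ρ t - x t * deriv ρ t) / ρ t ^ 2) t :=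
      ((hx t).hasDerivAt).div ((hρ t).hasDerivAt) (hρne t)
    have hfe : (fun u => x u / ρ u) = fun u => q (T u) := funext hQ
    rw [hfe] at hB
    have h := hA.unique hB
    have hρ2 : (ρ t) ^ 2 ≠ 0 := pow_ne_zero 2 (hρne t)
    field_simp at h
    rw [div_left_inj' hρ2] at h
    linarith [h]
  -- second derivative identity
  intro t
  have hA2 : HasDerivAt (fun u => deriv q (T u))
      (deriv (deriv q) (T t) * ((ρ t)⁻¹ ^ 2)) t :=
    ((hq' (T t)).hasDerivAt).comp t (hTd t)
  have hB2 : HasDerivAt (fun u => deriv x u * ρ u - x u * deriv ρ u)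
      ((deriv (deriv x) t * ρ t + deriv x t * deriv ρ t)
        - (deriv x t * deriv ρ t + x t * deriv (deriv ρ) t)) t :=
    (((hx' t).hasDerivAt).mul ((hρ t).hasDerivAt)).sub
      (((hx t).hasDerivAt).mul ((hρ' t).hasDerivAt))
  have hfe2 : (fun u => deriv q (T u)) = fun u => deriv x u * ρ u - x u * deriv ρ u :=
    funext hstep1
  rw [hfe2] at hA2
  have h := hA2.unique hB2
  -- substitute the ODEs
  have hx'' : deriv (deriv x) t = -(ω t ^ 2 * x t) := by linarith [hxeq t]
  have hρ'' : deriv (deriv ρ) t = 1 / ρ t ^ 3 - ω t ^ 2 * ρ t := by linarith [hρeq t]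
  rw [hx'', hρ''] at h
  have hqT : q (T t) = x t / ρ t := (hQ t).symm
  rw [hqT]
  rw [inv_pow, ← div_eq_mul_inv, div_eq_iff (pow_ne_zero 2 (hρne t))] at h
  have h3 : deriv (deriv q) (T t) = - x t / ρ t := by
    rw [h, eq_div_iff (hρne t)]
    have h1 : (1:ℝ) / ρ t ^ 3 * (ρ t ^ 2 * ρ t) = 1 := by
      rw [one_div, inv_mul_eq_div, div_eq_one_iff_eq (pow_ne_zero 3 (hρne t))]
      ring
    linear_combination (-(x t)) * h1
  rw [h3]
  ring
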